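/- Let R = ℤ[x₁, ..., x_n] and let t = ∏_{i=1}^n (1 − x_i). Suppose I ⊆ R is an ideal such that I + (1 − x_i) = R for every i = 1, ..., n. Then the contraction of I·R_t along R → R_t equals I. -/

import Mathlib

open MvPolynomial

theorem stmt_17 (n : ℕ) (I : Ideal (MvPolynomial (Fin n) ℤ))
    (h : ∀ i : Fin n, I + Ideal.span {1 - X i} = ⊤) :
    Ideal.comap
        (algebraMap (MvPolynomial (Fin n) ℤ)
          (Localization.Away (∏ i, (1 - X i : MvPolynomial (Fin n) ℤ))))
        (Ideal.map
          (algebraMap (MvPolynomial (Fin n) ℤ)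
            (Localization.Away (∏ i, (1 - X i : MvPolynomial (Fin n) ℤ))))
          I) = I := by
  set R := MvPolynomial (Fin n) ℤ
  set t : R := ∏ i, (1 - X i) with ht
  -- I ⊔ (t) = ⊤
  have htop : I ⊔ Ideal.span {t} = ⊤ := by
    rw [ht, ← Ideal.prod_span_singleton]
    exact Ideal.sup_prod_eq_top fun i _ => by
      rw [← Ideal.add_eq_sup]; exact h i
  -- multiplying by t preserves membership back to I
  have key : ∀ r : R, t * r ∈ I → r ∈ I := by
    intro r hr
    have h1 : (1 : R) ∈ I ⊔ Ideal.span {t} := htop ▸ Submodule.mem_top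
    rcases Submodule.mem_sup.mp h1 with ⟨a, ha, b, hb, hab⟩
    rcases Ideal.mem_span_singleton'.mp hb with ⟨c, hc⟩
    have : r = r * a + c * (t * r) := by
      rw [← hc] at hab
      have : r * 1 = r * (a + c * t) := by rw [hab]
      linear_combination this
    rw [this]
    exact I.add_mem (I.mul_mem_left r ha) (I.mul_mem_left c hr)
  have keyPow : ∀ (k : ℕ) (r : R), t ^ k * r ∈ I → r ∈ I := by
    intro k
    induction k with
    | zero => intro r hr; simpa using hr
    | succ k ih =>
      intro r hr
      apply ih
      apply key
      rw [← mul_assoc, mul_comm t (t ^ k)]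
      exact hr
  refine le_antisymm ?_ Ideal.le_comap_map
  intro r hr
  have hr' : algebraMap R (Localization.Away t) r ∈
      Ideal.map (algebraMap R (Localization.Away t)) I := hr
  rw [IsLocalization.mem_map_algebraMap_iff (Submonoid.powers t)] at hr'
  rcases hr' with ⟨⟨⟨a, ha⟩, s⟩, hs⟩
  -- hs : algebraMap r * algebraMap s = algebraMap a
  have heq : algebraMap R (Localization.Away t) (r * (s : R)) =
      algebraMap R (Localization.Away t) a := by
    rw [map_mul]; exact hs
  rcases (IsLocalization.eq_iff_exists (Submonoid.powers t) _).mp heq with ⟨c, hc⟩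
  -- hc : c * (r * s) = c * a
  rcases c.2 with ⟨k1, hk1⟩
  rcases s.2 with ⟨k2, hk2⟩
  apply keyPow (k1 + k2) r
  have : t ^ (k1 + k2) * r = (c : R) * (r * (s : R)) := by
    rw [pow_add, ← hk1, ← hk2]; ring
  rw [this, hc]
  exact I.mul_mem_left _ ha
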